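/- Let H = S·V₀ where V₀ = O_p(H) is a normal p-subgroup of H and S a p'-subgroup, and suppose g is an element normalizing S such that V₀^g ≠ V₀ and both V₀, V₀^g lie in an abelian p-group V. Then H and H^g are not conjugate in ⟨H, H^g⟩; in particular H is not pronormal in any group containing g. -/

import Mathlib

/-- The conjugate subgroup `H^g = g H g⁻¹` (conjugation by `g`). -/
def conjSub {G : Type*} [Group G] (g : G) (H : Subgroup G) : Subgroup G :=
  H.map (MulAut.conj g).toMonoidHom

/-- A subgroup `H` of `G` is pronormal in `G` if for every `g ∈ G` the subgroups `H` and
`H^g` are conjugate by an element of `⟨H, H^g⟩`. -/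
def IsPronormal {G : Type*} [Group G] (H : Subgroup G) : Prop :=
  ∀ g : G, ∃ x ∈ H ⊔ conjSub g H, conjSub x H = conjSub g H

section Aux

open scoped Pointwise

variable {G : Type*} [Group G]

lemma mem_conjSub {a y : G} {K : Subgroup G} :
    y ∈ conjSub a K ↔ a⁻¹ * y * a ∈ K := by
  constructor
  · rintro ⟨x, hx, rfl⟩
    simpa [MulAut.conj_apply, mul_assoc] using hx
  · intro h
    exact ⟨a⁻¹ * y * a, h, by simp [MulAut.conj_apply]; group⟩

lemma coe_conjSub (a : G) (K : Subgroup G) :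
    (conjSub a K : Set G) = (fun y => a * y * a⁻¹) '' K := by
  simp [conjSub, Subgroup.coe_map, MulAut.conj_apply]; rfl

lemma conjSub_eq_of_mem_normalizer {a : G} {K : Subgroup G} (h : a ∈ Subgroup.normalizer (K : Set G)) :
    conjSub a K = K := by
  rw [Subgroup.mem_normalizer_iff] at h
  ext y
  rw [mem_conjSub]
  have h2 := h (a⁻¹ * y * a)
  have e : a * (a⁻¹ * y * a) * a⁻¹ = y := by group
  rw [e] at h2
  exact h2

lemma mem_normalizer_of_conjSub {a : G} {K : Subgroup G} (h : conjSub a K = K) :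
    a ∈ Subgroup.normalizer (K : Set G) := by
  rw [Subgroup.mem_normalizer_iff]
  intro x
  constructor
  · intro hx
    rw [← h, mem_conjSub]
    group
    simpa using hx
  · intro hx
    rw [← h, mem_conjSub] at hx
    group at hx
    simpa using hx

/-- The set of `p`-elements of `H` is exactly `V₀`. -/
lemma pElts_eq [Finite G] {p : ℕ} (H S V₀ : Subgroup G)
    (hH : H = V₀ ⊔ S) (h0H : ∀ h ∈ H, conjSub h V₀ = V₀)
    (hS : Nat.Coprime (Nat.card S) p) (hpV₀ : IsPGroup p V₀) :
    {y : G | y ∈ H ∧ ∃ k, y ^ p ^ k = 1} = (V₀ : Set G) := by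
  have hV₀H : V₀ ≤ H := hH ▸ le_sup_left
  have hSH : S ≤ H := hH ▸ le_sup_right
  ext y
  constructor
  · rintro ⟨hyH, k, hk⟩
    set V' := V₀.subgroupOf H with hV'
    haveI : V'.Normal := by
      constructor
      intro n hn h
      have hc := h0H (h : G) h.2
      have : ((h : G) * n * (h : G)⁻¹ : G) ∈ conjSub (h : G) V₀ := by
        rw [mem_conjSub]
        group
        simpa [hV', Subgroup.mem_subgroupOf] using hn
      rw [hc] at this
      simpa [hV', Subgroup.mem_subgroupOf] using this
    have hsup : V' ⊔ S.subgroupOf H = ⊤ := by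
      show V₀.subgroupOf H ⊔ S.subgroupOf H = ⊤
      rw [← Subgroup.subgroupOf_sup hV₀H hSH, ← hH, Subgroup.subgroupOf_self]
    let f : S →* H ⧸ V' := (QuotientGroup.mk' V').comp (Subgroup.inclusion hSH)
    have hf : Function.Surjective f := by
      intro q
      obtain ⟨h, rfl⟩ := QuotientGroup.mk'_surjective V' q
      have hh : h ∈ V' ⊔ S.subgroupOf H := hsup ▸ Subgroup.mem_top h
      have hh' : h ∈ (V' : Set H) * (S.subgroupOf H : Set H) := by
        rw [← Subgroup.normal_mul]; exact hh
      obtain ⟨v, hv, s, hs, rfl⟩ := hh'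
      refine ⟨⟨(s : G), hs⟩, ?_⟩
      have : (QuotientGroup.mk' V') v = 1 := by
        rw [QuotientGroup.mk'_apply, QuotientGroup.eq_one_iff]; exact hv
      simp only [f, MonoidHom.comp_apply, map_mul, this, one_mul]
      congr 1
    have hdvd : Nat.card (H ⧸ V') ∣ Nat.card S := Subgroup.card_dvd_of_surjective f hf
    have hcop : Nat.Coprime (Nat.card (H ⧸ V')) p := Nat.Coprime.coprime_dvd_left hdvd hS
    set q : H ⧸ V' := QuotientGroup.mk' V' ⟨y, hyH⟩ with hq
    have h1 : orderOf q ∣ p ^ k := by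
      apply orderOf_dvd_of_pow_eq_one
      rw [hq, ← map_pow, QuotientGroup.mk'_apply, QuotientGroup.eq_one_iff]
      have : ((⟨y, hyH⟩ : H) ^ p ^ k : H) = 1 := by
        ext; simpa using hk
      rw [this]; exact V'.one_mem
    have h2 : orderOf q ∣ Nat.card (H ⧸ V') := orderOf_dvd_natCard q
    have hq1 : q = 1 := orderOf_eq_one_iff.mp
      (Nat.eq_one_of_dvd_coprimes (hcop.pow_right k).symm h1 h2)
    rw [hq, QuotientGroup.mk'_apply, QuotientGroup.eq_one_iff] at hq1
    simpa [hV', Subgroup.mem_subgroupOf] using hq1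
  · intro hy
    refine ⟨hV₀H hy, ?_⟩
    obtain ⟨k, hk⟩ := hpV₀ ⟨y, hy⟩
    exact ⟨k, by simpa [← Subgroup.coe_pow] using congrArg (Subtype.val) hk⟩

/-- Conjugation carries `p`-elements of `K` to `p`-elements of `conjSub a K`. -/
lemma pElts_conj {p : ℕ} (a : G) (K : Subgroup G) :
    {y : G | y ∈ conjSub a K ∧ ∃ k, y ^ p ^ k = 1} =
      (fun y => a * y * a⁻¹) '' {y : G | y ∈ K ∧ ∃ k, y ^ p ^ k = 1} := by
  ext y
  constructor
  · rintro ⟨hy, k, hk⟩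
    rw [mem_conjSub] at hy
    refine ⟨a⁻¹ * y * a, ⟨hy, k, ?_⟩, by group⟩
    have : (a⁻¹ * y * a) ^ p ^ k = a⁻¹ * y ^ p ^ k * a := by
      rw [show a⁻¹ * y * a = a⁻¹ * y * a⁻¹⁻¹ by group, conj_pow]; group
    rw [this, hk]; group
  · rintro ⟨z, ⟨hz, k, hk⟩, rfl⟩
    refine ⟨mem_conjSub.mpr (by group; simpa using hz), k, ?_⟩
    rw [conj_pow, hk]; group

end Aux

/-- Let `H = S · V₀` where `V₀ = O_p(H)` is a normal `p`-subgroup of `H`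
with `p'`-complement `S`, and let `g` normalize `S` with `V₀^g ≠ V₀`, both `V₀` and
`V₀^g` lying in an abelian `p`-group `V`. Then `H` and `H^g` are not conjugate in
`⟨H, H^g⟩`; in particular `H` is not pronormal. -/
theorem stmt19 {G : Type*} [Group G] [Finite G] {p : ℕ} (hp : p.Prime)
    (H S V₀ V : Subgroup G) (g : G)
    (hab : ∀ x ∈ V, ∀ y ∈ V, x * y = y * x) (hpV : IsPGroup p V)
    (h0V : V₀ ≤ V) (h0gV : conjSub g V₀ ≤ V)
    (hH : H = V₀ ⊔ S) (h0H : ∀ h ∈ H, conjSub h V₀ = V₀) (hSV₀ : S ⊓ V₀ = ⊥)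
    (hS : Nat.Coprime (Nat.card S) p)
    (hgS : conjSub g S = S) (hg0 : conjSub g V₀ ≠ V₀) :
    (¬ ∃ x ∈ H ⊔ conjSub g H, conjSub x H = conjSub g H) ∧ ¬ IsPronormal H := by
  have hpV₀ : IsPGroup p V₀ := hpV.to_le h0V
  have hA := pElts_eq (p := p) H S V₀ hH h0H hS hpV₀
  have hSleH : S ≤ H := hH ▸ le_sup_right
  have key : ¬ ∃ x ∈ H ⊔ conjSub g H, conjSub x H = conjSub g H := by
    rintro ⟨x, hxM, hconj⟩
    -- conjSub x V₀ = conjSub g V₀ via the p-element characterization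
    have hx0 : conjSub x V₀ = conjSub g V₀ := by
      apply SetLike.coe_injective
      rw [coe_conjSub, coe_conjSub, ← hA,
        ← pElts_conj (p := p) x H, ← pElts_conj (p := p) g H, hconj]
    -- V₀ is normal in H ⊔ H^g
    have hHn : H ≤ Subgroup.normalizer (V₀ : Set G) := fun h hh => mem_normalizer_of_conjSub (h0H h hh)
    have hgHn : conjSub g H ≤ Subgroup.normalizer (V₀ : Set G) := by
      have hmap : conjSub g H = conjSub g V₀ ⊔ conjSub g S := by
        rw [hH]; exact Subgroup.map_sup _ _ _
      rw [hmap, hgS]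
      apply sup_le
      · intro z hz
        apply mem_normalizer_of_conjSub
        have hzV : z ∈ V := h0gV hz
        ext w
        rw [mem_conjSub]
        constructor
        · intro hw
          have hwV : (z⁻¹ * w * z : G) ∈ V := h0V hw
          have hzu : z * (z⁻¹ * w * z) = (z⁻¹ * w * z) * z := hab z hzV _ hwV
          have e : z * (z⁻¹ * w * z) * z⁻¹ = w := by group
          rw [hzu] at e
          have e2 : z⁻¹ * w * z = w := by simpa [mul_assoc] using e
          exact e2 ▸ hw
        · intro hw
          have hwV : (w : G) ∈ V := h0V hw
          have hcomm : z * w = w * z := hab z hzV w hwV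
          have : z⁻¹ * w * z = w := by
            rw [mul_assoc, ← hcomm]; group
          rw [this]; exact hw
      · exact hSleH.trans hHn
    have hxn : x ∈ Subgroup.normalizer (V₀ : Set G) := (sup_le hHn hgHn) hxM
    exact hg0 (hx0.symm.trans (conjSub_eq_of_mem_normalizer hxn))
  exact ⟨key, fun hpr => key (hpr g)⟩
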